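/- Let F : W ⇄ V : G be an adjunction between monoidal categories where G is lax monoidal and the counit ε : F(𝟙_W) ⟶ 𝟙_V of the corresponding oplax monoidal structure on F is an isomorphism. Then for every V-enriched category C, the underlying category of the W-enriched category G_*C is isomorphic to the underlying category of C via an identity-on-objects isomorphism of categories: for all objects x, y, the bijection Hom_W(𝟙_W, G(C(x,y))) ≅ Hom_V(F(𝟙_W), C(x,y)) ≅ Hom_V(𝟙_V, C(x,y)) (the adjunction bijection followed by precomposition with ε⁻¹) sends enriched identities to enriched identities and is compatible with the compositions of the two underlying categories. -/

import Mathlib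

/-!
STATEMENT 1: Let `F : W ⇄ V : G` be an adjunction between monoidal categories where `G` is
lax monoidal and the counit `ε : F(𝟙_W) ⟶ 𝟙_V` of the corresponding oplax monoidal
structure on `F` (i.e. the adjunct `(adj.homEquiv _ _).symm (ε G)` of the lax monoidal unit
of `G`) is an isomorphism (witnessed by a two-sided inverse `εinv`). Then for every
`V`-enriched category `C`, the underlying category of the `W`-enriched category `G_*C` is
isomorphic to the underlying category of `C` via an identity-on-objects isomorphism:
for all objects `x, y`, the map
`Hom_W(𝟙_W, G(C(x,y))) ≅ Hom_V(F(𝟙_W), C(x,y)) ≅ Hom_V(𝟙_V, C(x,y))`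
(the adjunction bijection followed by precomposition with `ε⁻¹`) is a bijection which sends
the enriched identities of `G_*C` (namely `ε G ≫ G.map (eId V x)`) to enriched identities,
and is compatible with the compositions of the two underlying categories (where composition
of `G_*C` is induced by the lax monoidal structure of `G`).
-/

open CategoryTheory Category MonoidalCategory Functor

theorem underlying_of_transport_enrichment_iso
    {W V : Type*} [Category W] [Category V]
    [MonoidalCategory W] [MonoidalCategory V]
    (F : W ⥤ V) (G : V ⥤ W) [G.LaxMonoidal] (adj : F ⊣ G)
    (εinv : 𝟙_ V ⟶ F.obj (𝟙_ W))
    (hε₁ : (adj.homEquiv (𝟙_ W) (𝟙_ V)).symm (LaxMonoidal.ε G) ≫ εinv = 𝟙 (F.obj (𝟙_ W)))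
    (hε₂ : εinv ≫ (adj.homEquiv (𝟙_ W) (𝟙_ V)).symm (LaxMonoidal.ε G) = 𝟙 (𝟙_ V))
    {C : Type*} [EnrichedCategory V C] :
    -- the comparison maps on the hom-sets of the underlying categories are bijections
    (∀ x y : C, Function.Bijective
        (fun g : 𝟙_ W ⟶ G.obj (EnrichedCategory.Hom x y : V) =>
          εinv ≫ (adj.homEquiv (𝟙_ W) (EnrichedCategory.Hom x y)).symm g)) ∧
      -- they send the enriched identities of `G_*C` to the enriched identities of `C`
      (∀ x : C,
        εinv ≫ (adj.homEquiv (𝟙_ W) (EnrichedCategory.Hom x x)).symm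
            (LaxMonoidal.ε G ≫ G.map (eId V x)) = eId V x) ∧
      -- they are compatible with the compositions of the two underlying categories
      (∀ (x y z : C) (f : 𝟙_ W ⟶ G.obj (EnrichedCategory.Hom x y : V))
          (g : 𝟙_ W ⟶ G.obj (EnrichedCategory.Hom y z : V)),
        εinv ≫ (adj.homEquiv (𝟙_ W) (EnrichedCategory.Hom x z)).symm
            ((λ_ (𝟙_ W)).inv ≫ (f ⊗ₘ g) ≫
              LaxMonoidal.μ G (EnrichedCategory.Hom x y) (EnrichedCategory.Hom y z) ≫
              G.map (eComp V x y z)) =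
          (λ_ (𝟙_ V)).inv ≫
            ((εinv ≫ (adj.homEquiv (𝟙_ W) (EnrichedCategory.Hom x y)).symm f) ⊗ₘ
              (εinv ≫ (adj.homEquiv (𝟙_ W) (EnrichedCategory.Hom y z)).symm g)) ≫
            eComp V x y z) := by
  set e : F.obj (𝟙_ W) ⟶ 𝟙_ V := (adj.homEquiv (𝟙_ W) (𝟙_ V)).symm (LaxMonoidal.ε G) with he
  have hu : adj.unit.app (𝟙_ W) ≫ G.map e = LaxMonoidal.ε G := by
    have h := (adj.homEquiv (𝟙_ W) (𝟙_ V)).apply_symm_apply (LaxMonoidal.ε G)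
    rw [Adjunction.homEquiv_unit] at h
    rw [he]
    exact h
  have he' : e = F.map (LaxMonoidal.ε G) ≫ adj.counit.app (𝟙_ V) := by
    rw [he, Adjunction.homEquiv_counit]
  have h2 : (LaxMonoidal.ε G ⊗ₘ LaxMonoidal.ε G) ≫ LaxMonoidal.μ G (𝟙_ V) (𝟙_ V) =
      (λ_ (𝟙_ W)).hom ≫ LaxMonoidal.ε G ≫ G.map (λ_ (𝟙_ V)).inv := by
    have hlu : LaxMonoidal.ε G ▷ G.obj (𝟙_ V) ≫ LaxMonoidal.μ G (𝟙_ V) (𝟙_ V) =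
        (λ_ (G.obj (𝟙_ V))).hom ≫ G.map (λ_ (𝟙_ V)).inv := by
      rw [Functor.LaxMonoidal.left_unitality (F := G) (𝟙_ V)]
      simp only [assoc, ← G.map_comp, Iso.hom_inv_id, G.map_id, comp_id]
    rw [tensorHom_def', assoc, hlu, leftUnitor_naturality_assoc]
  have inner : ((λ_ (𝟙_ W)).inv ≫ (adj.unit.app (𝟙_ W) ⊗ₘ adj.unit.app (𝟙_ W)) ≫
        LaxMonoidal.μ G (F.obj (𝟙_ W)) (F.obj (𝟙_ W))) ≫ G.map (e ⊗ₘ e) =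
      LaxMonoidal.ε G ≫ G.map (λ_ (𝟙_ V)).inv := by
    rw [assoc, assoc, ← Functor.LaxMonoidal.μ_natural, tensorHom_comp_tensorHom_assoc, hu, h2,
      Iso.inv_hom_id_assoc]
  have hiso1 : (e ⊗ₘ e) ≫ (εinv ⊗ₘ εinv) = 𝟙 (F.obj (𝟙_ W) ⊗ F.obj (𝟙_ W)) := by
    rw [tensorHom_comp_tensorHom, hε₁, id_tensorHom_id]
  have M' : F.map ((λ_ (𝟙_ W)).inv ≫ (adj.unit.app (𝟙_ W) ⊗ₘ adj.unit.app (𝟙_ W)) ≫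
        LaxMonoidal.μ G (F.obj (𝟙_ W)) (F.obj (𝟙_ W))) ≫
        adj.counit.app (F.obj (𝟙_ W) ⊗ F.obj (𝟙_ W)) ≫ (e ⊗ₘ e) =
      e ≫ (λ_ (𝟙_ V)).inv := by
    rw [← adj.counit_naturality (e ⊗ₘ e), ← F.map_comp_assoc, inner, F.map_comp, assoc,
      adj.counit_naturality ((λ_ (𝟙_ V)).inv), ← assoc, ← he']
  have M : εinv ≫ F.map ((λ_ (𝟙_ W)).inv ≫ (adj.unit.app (𝟙_ W) ⊗ₘ adj.unit.app (𝟙_ W)) ≫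
        LaxMonoidal.μ G (F.obj (𝟙_ W)) (F.obj (𝟙_ W))) ≫
        adj.counit.app (F.obj (𝟙_ W) ⊗ F.obj (𝟙_ W)) =
      (λ_ (𝟙_ V)).inv ≫ (εinv ⊗ₘ εinv) := by
    have h := congrArg (fun t => εinv ≫ t ≫ (εinv ⊗ₘ εinv)) M'
    simp only [assoc] at h
    rw [hiso1] at h
    rw [reassoc_of% hε₂] at h
    simpa using h
  have key : ∀ (a b : V) (f : 𝟙_ W ⟶ G.obj a) (g : 𝟙_ W ⟶ G.obj b),
      εinv ≫ (adj.homEquiv (𝟙_ W) (a ⊗ b)).symm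
          ((λ_ (𝟙_ W)).inv ≫ (f ⊗ₘ g) ≫ LaxMonoidal.μ G a b) =
        (λ_ (𝟙_ V)).inv ≫
          ((εinv ≫ (adj.homEquiv (𝟙_ W) a).symm f) ⊗ₘ
            (εinv ≫ (adj.homEquiv (𝟙_ W) b).symm g)) := by
    intro a b f g
    have hf : f = adj.unit.app (𝟙_ W) ≫ G.map ((adj.homEquiv (𝟙_ W) a).symm f) := by
      have h := ((adj.homEquiv (𝟙_ W) a).apply_symm_apply f).symm
      rw [Adjunction.homEquiv_unit] at h
      exact h
    have hg : g = adj.unit.app (𝟙_ W) ≫ G.map ((adj.homEquiv (𝟙_ W) b).symm g) := by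
      have h := ((adj.homEquiv (𝟙_ W) b).apply_symm_apply g).symm
      rw [Adjunction.homEquiv_unit] at h
      exact h
    have h1 : (λ_ (𝟙_ W)).inv ≫ (f ⊗ₘ g) ≫ LaxMonoidal.μ G a b =
        ((λ_ (𝟙_ W)).inv ≫ (adj.unit.app (𝟙_ W) ⊗ₘ adj.unit.app (𝟙_ W)) ≫
          LaxMonoidal.μ G (F.obj (𝟙_ W)) (F.obj (𝟙_ W))) ≫
          G.map ((adj.homEquiv (𝟙_ W) a).symm f ⊗ₘ (adj.homEquiv (𝟙_ W) b).symm g) := by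
      conv_lhs => rw [hf, hg]
      rw [← tensorHom_comp_tensorHom, assoc, Functor.LaxMonoidal.μ_natural]
      simp only [assoc]
    rw [Adjunction.homEquiv_counit, h1, F.map_comp, assoc,
      adj.counit_naturality ((adj.homEquiv (𝟙_ W) a).symm f ⊗ₘ (adj.homEquiv (𝟙_ W) b).symm g)]
    have h := congrArg
      (fun t => t ≫ ((adj.homEquiv (𝟙_ W) a).symm f ⊗ₘ (adj.homEquiv (𝟙_ W) b).symm g)) M
    simp only [assoc] at h
    rw [h, tensorHom_comp_tensorHom]
  refine ⟨?_, ?_, ?_⟩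
  · intro x y
    constructor
    · intro g₁ g₂ hg
      have hg' : εinv ≫ (adj.homEquiv (𝟙_ W) (EnrichedCategory.Hom x y)).symm g₁ =
          εinv ≫ (adj.homEquiv (𝟙_ W) (EnrichedCategory.Hom x y)).symm g₂ := hg
      apply (adj.homEquiv (𝟙_ W) (EnrichedCategory.Hom x y)).symm.injective
      have h1 := congrArg (fun t => e ≫ t) hg'
      rw [← assoc, ← assoc, hε₁, id_comp, id_comp] at h1
      exact h1
    · intro h
      refine ⟨adj.homEquiv (𝟙_ W) (EnrichedCategory.Hom x y) (e ≫ h), ?_⟩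
      simp only [Equiv.symm_apply_apply]
      rw [← assoc, hε₂, id_comp]
  · intro x
    rw [Adjunction.homEquiv_naturality_right_symm, ← he, ← assoc, hε₂, id_comp]
  · intro x y z f g
    have hassoc : (λ_ (𝟙_ W)).inv ≫ (f ⊗ₘ g) ≫
        LaxMonoidal.μ G (EnrichedCategory.Hom x y) (EnrichedCategory.Hom y z) ≫
        G.map (eComp V x y z) =
        ((λ_ (𝟙_ W)).inv ≫ (f ⊗ₘ g) ≫
          LaxMonoidal.μ G (EnrichedCategory.Hom x y) (EnrichedCategory.Hom y z)) ≫
          G.map (eComp V x y z) := by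
      simp only [assoc]
    rw [hassoc, Adjunction.homEquiv_naturality_right_symm, ← assoc, key, assoc]
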